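/- For every ρ ∈ W_n and m = 2^{n−1}, the maximal degree M_m(ρ) for which a Chebyshev-type quadrature with m equal-weight nodes in [-1,1] is exact equals exactly 2m − 1 = 2^n − 1. -/

import Mathlib

noncomputable def xseq : ℕ → ℝ
  | 0 => -1
  | n + 1 => Real.sqrt ((1 + xseq n) / 2)
/-- `Q p` is the Chebyshev polynomial of degree `2^p`, the `p`-fold composite of `2x²-1`. -/
noncomputable def Q (p : ℕ) : ℝ → ℝ := (fun t : ℝ => 2 * t ^ 2 - 1)^[p]
/-- `S` is the reflection associated to `P_{2^k}` on `[x_{k+1}, 1]`. -/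
def IsReflection (k : ℕ) (S : ℝ → ℝ) : Prop :=
  Set.BijOn S (Set.Icc (xseq (k + 1)) 1) (Set.Icc (xseq k) (xseq (k + 1))) ∧
  ∀ y ∈ Set.Icc (xseq (k + 1)) 1, Q k (S y) = -(Q k y)
/-- The weight class `W_n` (relative to the reflections `S k`). -/
noncomputable def memW (S : ℕ → ℝ → ℝ) (n : ℕ) (ρ : ℝ → ℝ) : Prop :=
  (∀ x ∈ Set.Ioo (-1 : ℝ) 1, 0 ≤ ρ x) ∧
  ((∫ x in (-1 : ℝ)..1, ρ x) = 1) ∧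
  ∀ k < n, ∀ y ∈ Set.Ioo (xseq (k + 1)) 1, ρ y = -(ρ (S k y) * deriv (S k) y)

/-- There is a Chebyshev-type quadrature for `ρ` with `m` distinct equal-weight nodes in
`[-1,1]`, exact on all polynomials of degree at most `N`. -/
noncomputable def ChebQuadDeg (ρ : ℝ → ℝ) (m N : ℕ) : Prop :=
  ∃ t : Fin m → ℝ, Function.Injective t ∧ (∀ k, t k ∈ Set.Icc (-1 : ℝ) 1) ∧
    ∀ P : Polynomial ℝ, P.natDegree ≤ N →
      (∫ x in (-1 : ℝ)..1, P.eval x * ρ x) = (1 / (m : ℝ)) * ∑ k, P.eval (t k)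

open Real Set Polynomial MeasureTheory

lemma pipow_pos (k : ℕ) : 0 < π / 2 ^ k := div_pos pi_pos (by positivity)

lemma pipow_le_pi (k : ℕ) : π / 2 ^ k ≤ π := by
  rw [div_le_iff₀ (by positivity)]
  nlinarith [pi_pos, one_le_pow₀ (a := (2:ℝ)) (n := k) (by norm_num)]

lemma pipow_succ (k : ℕ) : π / 2 ^ (k + 1) = (π / 2 ^ k) / 2 := by
  rw [pow_succ]; ring

lemma xseq_eq (k : ℕ) : xseq k = Real.cos (π / 2 ^ k) := by
  induction k with
  | zero => simp [xseq]
  | succ k ih =>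
      rw [xseq, ih, pipow_succ, Real.cos_half (by linarith [pipow_pos k, pi_pos]) (pipow_le_pi k)]

lemma Q_eq_T (p : ℕ) (x : ℝ) : Q p x = (Polynomial.Chebyshev.T ℝ (2 ^ p : ℕ)).eval x := by
  induction p generalizing x with
  | zero => simp [Q, Polynomial.Chebyshev.T_one]
  | succ p ih =>
      have h2 : ((2 ^ (p + 1) : ℕ) : ℤ) = 2 * ((2 ^ p : ℕ) : ℤ) := by push_cast; ring
      have h1 : Q (p + 1) x = 2 * (Q p x) ^ 2 - 1 := Function.iterate_succ_apply' _ _ _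
      rw [h1, ih, h2, Polynomial.Chebyshev.T_mul, Polynomial.eval_comp, Polynomial.Chebyshev.T_two]
      simp

lemma Q_cos (p : ℕ) (θ : ℝ) : Q p (Real.cos θ) = Real.cos (2 ^ p * θ) := by
  rw [Q_eq_T, Polynomial.Chebyshev.T_real_cos]
  push_cast
  ring_nf

lemma xseq_mem (k : ℕ) : xseq k ∈ Icc (-1 : ℝ) 1 := by
  rw [xseq_eq]; exact ⟨Real.neg_one_le_cos _, Real.cos_le_one _⟩

lemma xseq_lt_succ (k : ℕ) : xseq k < xseq (k + 1) := by
  rw [xseq_eq, xseq_eq, pipow_succ]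
  exact Real.cos_lt_cos_of_nonneg_of_le_pi (by linarith [pipow_pos (k+1), pipow_succ k])
    (pipow_le_pi k) (by linarith [pipow_pos (k+1), pipow_succ k])

lemma xseq_lt_one (k : ℕ) : xseq k < 1 := by
  rw [xseq_eq]
  calc Real.cos (π / 2 ^ k) < Real.cos 0 :=
        Real.cos_lt_cos_of_nonneg_of_le_pi le_rfl (pipow_le_pi k) (pipow_pos k)
  _ = 1 := Real.cos_zero

/-- arccos of points of `[x_{k+1}, 1]` lies in `[0, π/2^{k+1}]`. -/

lemma arccos_mem_outer {k : ℕ} {y : ℝ} (hy : y ∈ Icc (xseq (k + 1)) 1) :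
    Real.arccos y ∈ Icc 0 (π / 2 ^ (k + 1)) := by
  refine ⟨Real.arccos_nonneg y, ?_⟩
  have h1 : Real.cos (π / 2 ^ (k + 1)) ≤ Real.cos (Real.arccos y) := by
    rw [Real.cos_arccos ((xseq_mem (k+1)).1.trans hy.1) hy.2, ← xseq_eq]; exact hy.1
  exact (Real.strictAntiOn_cos.le_iff_ge ⟨(pipow_pos _).le, pipow_le_pi _⟩
    ⟨Real.arccos_nonneg y, Real.arccos_le_pi y⟩).1 h1

/-- arccos of points of `[x_k, x_{k+1}]` lies in `[π/2^{k+1}, π/2^k]`. -/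

lemma arccos_mem_inner {k : ℕ} {a : ℝ} (ha : a ∈ Icc (xseq k) (xseq (k + 1))) :
    Real.arccos a ∈ Icc (π / 2 ^ (k + 1)) (π / 2 ^ k) := by
  have ha1 : -1 ≤ a := (xseq_mem k).1.trans ha.1
  have ha2 : a ≤ 1 := ha.2.trans (xseq_mem (k+1)).2
  have lo : Real.cos (Real.arccos a) ≤ Real.cos (π / 2 ^ (k+1)) := by
    rw [Real.cos_arccos ha1 ha2, ← xseq_eq]; exact ha.2
  have hi : Real.cos (π / 2 ^ k) ≤ Real.cos (Real.arccos a) := by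
    rw [Real.cos_arccos ha1 ha2, ← xseq_eq]; exact ha.1
  have m1 : π / 2 ^ (k+1) ∈ Icc 0 π := ⟨(pipow_pos (k+1)).le, pipow_le_pi (k+1)⟩
  have m2 : π / 2 ^ k ∈ Icc 0 π := ⟨(pipow_pos k).le, pipow_le_pi k⟩
  have m3 : Real.arccos a ∈ Icc 0 π := ⟨Real.arccos_nonneg a, Real.arccos_le_pi a⟩
  exact ⟨(Real.strictAntiOn_cos.le_iff_ge m3 m1).1 lo,
    (Real.strictAntiOn_cos.le_iff_ge m2 m3).1 hi⟩

/-- `Q k` is injective on `[x_k, x_{k+1}]`. -/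

lemma Qk_injOn (k : ℕ) : InjOn (Q k) (Icc (xseq k) (xseq (k + 1))) := by
  intro a ha b hb hab
  have ha1 : -1 ≤ a := (xseq_mem k).1.trans ha.1
  have ha2 : a ≤ 1 := ha.2.trans (xseq_mem (k+1)).2
  have hb1 : -1 ≤ b := (xseq_mem k).1.trans hb.1
  have hb2 : b ≤ 1 := hb.2.trans (xseq_mem (k+1)).2
  have hqa : Q k a = Real.cos (2 ^ k * Real.arccos a) := by
    rw [← Q_cos k (Real.arccos a), Real.cos_arccos ha1 ha2]
  have hqb : Q k b = Real.cos (2 ^ k * Real.arccos b) := by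
    rw [← Q_cos k (Real.arccos b), Real.cos_arccos hb1 hb2]
  have haa := arccos_mem_inner ha
  have hbb := arccos_mem_inner hb
  have hmem : ∀ c : ℝ, c ∈ Icc (π / 2 ^ (k+1)) (π / 2 ^ k) → (2:ℝ) ^ k * c ∈ Icc 0 π := by
    intro c hc
    have h2k : (0:ℝ) < 2 ^ k := by positivity
    constructor
    · nlinarith [pipow_pos (k+1), hc.1]
    · have : (2:ℝ) ^ k * (π / 2 ^ k) = π := by field_simp
      nlinarith [hc.2]
  have key : 2 ^ k * Real.arccos a = 2 ^ k * Real.arccos b := by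
    apply Real.injOn_cos (hmem _ haa) (hmem _ hbb)
    rw [← hqa, ← hqb, hab]
  have : Real.arccos a = Real.arccos b := by
    have h2k : (0:ℝ) < 2 ^ k := by positivity
    exact mul_left_cancel₀ h2k.ne' key
  calc a = Real.cos (Real.arccos a) := (Real.cos_arccos ha1 ha2).symm
  _ = Real.cos (Real.arccos b) := by rw [this]
  _ = b := Real.cos_arccos hb1 hb2

/-- The explicit formula for the reflection. -/

noncomputable def Ek (k : ℕ) (y : ℝ) : ℝ := Real.cos (π / 2 ^ k - Real.arccos y)

/-- The derivative of the reflection. -/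

noncomputable def Dk (k : ℕ) (y : ℝ) : ℝ :=
  -Real.sin (π / 2 ^ k - Real.arccos y) * (1 / Real.sqrt (1 - y ^ 2))

lemma Ek_angle_mem {k : ℕ} {y : ℝ} (hy : y ∈ Icc (xseq (k + 1)) 1) :
    π / 2 ^ k - Real.arccos y ∈ Icc (π / 2 ^ (k + 1)) (π / 2 ^ k) := by
  have h := arccos_mem_outer hy
  have hp := pipow_succ k
  exact ⟨by rw [hp] at h ⊢; linarith [h.2], by linarith [h.1]⟩

lemma Ek_mem {k : ℕ} {y : ℝ} (hy : y ∈ Icc (xseq (k + 1)) 1) :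
    Ek k y ∈ Icc (xseq k) (xseq (k + 1)) := by
  have h := Ek_angle_mem hy
  rw [xseq_eq, xseq_eq]
  constructor
  · exact Real.cos_le_cos_of_nonneg_of_le_pi
      (by linarith [(pipow_pos (k+1)).le, h.1]) (pipow_le_pi k) h.2
  · exact Real.cos_le_cos_of_nonneg_of_le_pi (pipow_pos (k+1)).le
      (by linarith [pipow_le_pi k, h.2]) h.1

lemma Q_Ek {k : ℕ} {y : ℝ} (hy : y ∈ Icc (xseq (k + 1)) 1) : Q k (Ek k y) = -(Q k y) := by
  have hy1 : -1 ≤ y := (xseq_mem (k+1)).1.trans hy.1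
  have hQy : Q k y = Real.cos (2 ^ k * Real.arccos y) := by
    rw [← Q_cos k (Real.arccos y), Real.cos_arccos hy1 hy.2]
  have harg : (2:ℝ) ^ k * (π / 2 ^ k - Real.arccos y) = π - 2 ^ k * Real.arccos y := by
    have : (2:ℝ) ^ k * (π / 2 ^ k) = π := by field_simp
    ring_nf
    ring_nf at this
    linarith [this]
  rw [Ek, Q_cos, harg, Real.cos_pi_sub, hQy]

lemma S_eq_Ek {k : ℕ} {Sf : ℝ → ℝ} (hSk : IsReflection k Sf) {y : ℝ}
    (hy : y ∈ Icc (xseq (k + 1)) 1) : Sf y = Ek k y := by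
  apply Qk_injOn k (hSk.1.mapsTo hy) (Ek_mem hy)
  rw [hSk.2 y hy, Q_Ek hy]

lemma hasDerivAt_Ek {k : ℕ} {y : ℝ} (h1 : -1 < y) (h2 : y < 1) :
    HasDerivAt (Ek k) (Dk k y) y := by
  have ha : HasDerivAt (fun y : ℝ => π / 2 ^ k - Real.arccos y)
      (-(-(1 / Real.sqrt (1 - y ^ 2)))) y :=
    (Real.hasDerivAt_arccos h1.ne' h2.ne).const_sub _
  have := ha.cos
  show HasDerivAt (fun x => Real.cos (π / 2 ^ k - Real.arccos x)) _ y
  simpa [Ek, Dk] using this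

lemma xseq_one_lt {k : ℕ} : (-1 : ℝ) < xseq (k + 1) := by
  have h1 : π / 2 ^ (k+1) < π := by
    have := pipow_succ k
    have := pipow_le_pi k
    have := pipow_pos k
    linarith
  rw [xseq_eq, show (-1 : ℝ) = Real.cos π by simp]
  exact Real.cos_lt_cos_of_nonneg_of_le_pi (pipow_pos (k+1)).le le_rfl h1

lemma deriv_S_eq {k : ℕ} {Sf : ℝ → ℝ} (hSk : IsReflection k Sf) {y : ℝ}
    (hy : y ∈ Ioo (xseq (k + 1)) 1) : deriv Sf y = Dk k y := by
  have hnb : Icc (xseq (k + 1)) 1 ∈ nhds y := Icc_mem_nhds hy.1 hy.2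
  have heq : Sf =ᶠ[nhds y] Ek k :=
    Filter.eventuallyEq_of_mem hnb (fun z hz => S_eq_Ek hSk hz)
  rw [Filter.EventuallyEq.deriv_eq heq]
  exact (hasDerivAt_Ek (lt_trans xseq_one_lt hy.1) hy.2).deriv

lemma Ek_injOn (k : ℕ) : InjOn (Ek k) (Ioo (xseq (k + 1)) 1) := by
  intro a ha b hb hab
  have ha' : a ∈ Icc (xseq (k+1)) 1 := Ioo_subset_Icc_self ha
  have hb' : b ∈ Icc (xseq (k+1)) 1 := Ioo_subset_Icc_self hb
  have hma := Ek_angle_mem ha'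
  have hmb := Ek_angle_mem hb'
  have key : π / 2 ^ k - Real.arccos a = π / 2 ^ k - Real.arccos b :=
    Real.injOn_cos ⟨by linarith [(pipow_pos (k+1)).le, hma.1], by linarith [pipow_le_pi k, hma.2]⟩
      ⟨by linarith [(pipow_pos (k+1)).le, hmb.1], by linarith [pipow_le_pi k, hmb.2]⟩ hab
  have : Real.arccos a = Real.arccos b := by linarith
  have ha1 : -1 ≤ a := le_trans (xseq_mem (k+1)).1 ha'.1
  have hb1 : -1 ≤ b := le_trans (xseq_mem (k+1)).1 hb'.1
  calc a = Real.cos (Real.arccos a) := (Real.cos_arccos ha1 ha'.2).symm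
  _ = Real.cos (Real.arccos b) := by rw [this]
  _ = b := Real.cos_arccos hb1 hb'.2

lemma Ek_image (k : ℕ) : Ek k '' (Ioo (xseq (k + 1)) 1) = Ioo (xseq k) (xseq (k + 1)) := by
  apply Subset.antisymm
  · rintro _ ⟨y, hy, rfl⟩
    have hy1 : -1 ≤ xseq (k+1) := (xseq_mem (k+1)).1
    have hac1 : 0 < Real.arccos y := Real.arccos_pos.2 hy.2
    have hac2 : Real.arccos y < π / 2 ^ (k+1) := by
      have := Real.strictAntiOn_arccos ⟨hy1, (xseq_mem (k+1)).2⟩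
        ⟨by linarith [hy.1], hy.2.le⟩ hy.1
      rwa [xseq_eq, Real.arccos_cos (pipow_pos (k+1)).le (pipow_le_pi (k+1))] at this
    have hps := pipow_succ k
    constructor
    · rw [xseq_eq]
      apply Real.cos_lt_cos_of_nonneg_of_le_pi (by linarith [(pipow_pos (k+1)).le])
        (pipow_le_pi k) (by linarith)
    · rw [xseq_eq]
      apply Real.cos_lt_cos_of_nonneg_of_le_pi (pipow_pos (k+1)).le
        (by linarith [pipow_le_pi k]) (by linarith)
  · rintro v hv
    have hv1 : -1 ≤ v := le_trans (xseq_mem k).1 hv.1.le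
    have hv2 : v ≤ 1 := le_trans hv.2.le (xseq_mem (k+1)).2
    have hacv1 : Real.arccos v < π / 2 ^ k := by
      have := Real.strictAntiOn_arccos ⟨(xseq_mem k).1, (xseq_mem k).2⟩ ⟨hv1, hv2⟩ hv.1
      rwa [xseq_eq, Real.arccos_cos (pipow_pos k).le (pipow_le_pi k)] at this
    have hacv2 : π / 2 ^ (k+1) < Real.arccos v := by
      have := Real.strictAntiOn_arccos ⟨hv1, hv2⟩ ⟨(xseq_mem (k+1)).1, (xseq_mem (k+1)).2⟩ hv.2
      rwa [xseq_eq, Real.arccos_cos (pipow_pos (k+1)).le (pipow_le_pi (k+1))] at this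
    have hps := pipow_succ k
    have hps2 := pipow_le_pi (k+1)
    set β := π / 2 ^ k - Real.arccos v with hβ
    clear_value β
    have hβ1 : 0 < β := by rw [hβ]; linarith
    have hβ2 : β < π / 2 ^ (k+1) := by rw [hβ]; linarith
    refine ⟨Real.cos β, ⟨?_, ?_⟩, ?_⟩
    · rw [xseq_eq]
      exact Real.cos_lt_cos_of_nonneg_of_le_pi hβ1.le (pipow_le_pi (k+1)) hβ2
    · calc Real.cos β < Real.cos 0 :=
            Real.cos_lt_cos_of_nonneg_of_le_pi le_rfl (by linarith [pipow_le_pi (k+1)]) hβ1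
      _ = 1 := Real.cos_zero
    · rw [Ek, Real.arccos_cos hβ1.le (by linarith [pipow_le_pi (k+1)])]
      have : π / 2 ^ k - β = Real.arccos v := by rw [hβ]; ring
      rw [this, Real.cos_arccos hv1 hv2]

lemma step_lemma {k : ℕ} {Sf : ℝ → ℝ} {ρ : ℝ → ℝ} (hS : IsReflection k Sf)
    (hρk : ∀ y ∈ Set.Ioo (xseq (k + 1)) 1, ρ y = -(ρ (Sf y) * deriv Sf y)) (g : ℝ → ℝ) :
    ∫ x in Ioo (xseq k) (xseq (k + 1)), g (Q k x) * ρ x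
      = ∫ y in Ioo (xseq (k + 1)) 1, g (-(Q k y)) * ρ y := by
  rw [← Ek_image k]
  rw [MeasureTheory.integral_image_eq_integral_abs_deriv_smul measurableSet_Ioo
    (fun y hy => (hasDerivAt_Ek (lt_trans xseq_one_lt hy.1) hy.2).hasDerivWithinAt)
    (Ek_injOn k) (fun x => g (Q k x) * ρ x)]
  apply MeasureTheory.setIntegral_congr_fun measurableSet_Ioo
  intro y hy
  have hy' : y ∈ Icc (xseq (k+1)) 1 := Ioo_subset_Icc_self hy
  have hEq : Ek k y = Sf y := (S_eq_Ek hS hy').symm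
  have hQ : Q k (Ek k y) = -(Q k y) := Q_Ek hy'
  have hD : Dk k y ≤ 0 := by
    have hang := Ek_angle_mem hy'
    have hsin : 0 ≤ Real.sin (π / 2 ^ k - Real.arccos y) :=
      Real.sin_nonneg_of_nonneg_of_le_pi (by linarith [(pipow_pos (k+1)).le, hang.1])
        (by linarith [pipow_le_pi k, hang.2])
    have h2 : 0 ≤ 1 / Real.sqrt (1 - y ^ 2) := by positivity
    simp only [Dk, neg_mul]
    exact neg_nonpos_of_nonneg (mul_nonneg hsin h2)
  have habs : |Dk k y| * ρ (Ek k y) = ρ y := by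
    rw [abs_of_nonpos hD, hEq]
    rw [hρk y hy, ← deriv_S_eq hS hy]
    ring
  simp only [smul_eq_mul, hQ]
  calc |Dk k y| * (g (-(Q k y)) * ρ (Ek k y))
      = g (-(Q k y)) * (|Dk k y| * ρ (Ek k y)) := by ring
  _ = g (-(Q k y)) * ρ y := by rw [habs]

lemma Q_cont (k : ℕ) : Continuous (Q k) := by
  apply Continuous.iterate
  continuity

lemma Q_mem {k : ℕ} {x : ℝ} (hx : x ∈ Icc (-1 : ℝ) 1) : Q k x ∈ Icc (-1 : ℝ) 1 := by
  have : Q k x = Real.cos (2 ^ k * Real.arccos x) := by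
    rw [← Q_cos k (Real.arccos x), Real.cos_arccos hx.1 hx.2]
  rw [this]
  exact ⟨Real.neg_one_le_cos _, Real.cos_le_one _⟩

lemma T_eval_neg (r : ℕ) {u : ℝ} (hu : u ∈ Icc (-1 : ℝ) 1) :
    (Polynomial.Chebyshev.T ℝ (r : ℤ)).eval (-u) =
      (-1 : ℝ) ^ r * (Polynomial.Chebyshev.T ℝ (r : ℤ)).eval u := by
  have h1 : u = Real.cos (Real.arccos u) := (Real.cos_arccos hu.1 hu.2).symm
  have h2 : -u = Real.cos (π - Real.arccos u) := by rw [Real.cos_pi_sub, ← h1]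
  rw [h2]
  conv_rhs => rw [h1]
  rw [Polynomial.Chebyshev.T_real_cos, Polynomial.Chebyshev.T_real_cos]
  push_cast
  rw [mul_sub, ← Real.cos_nat_mul_pi_sub]

lemma rho_integrableOn {ρ : ℝ → ℝ} (h : (∫ x in (-1 : ℝ)..1, ρ x) = 1) :
    IntegrableOn ρ (Ioc (-1 : ℝ) 1) volume := by
  by_contra hc
  have : ¬ IntervalIntegrable ρ volume (-1 : ℝ) 1 := by
    rw [intervalIntegrable_iff_integrableOn_Ioc_of_le (by norm_num)]
    exact hc
  rw [intervalIntegral.integral_undef this] at h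
  norm_num at h

lemma cont_mul_rho {ρ : ℝ → ℝ} (hρ : IntegrableOn ρ (Ioc (-1 : ℝ) 1) volume)
    {f : ℝ → ℝ} (hf : Continuous f) {a b : ℝ} (ha : a ∈ Icc (-1 : ℝ) 1) (hb : b ∈ Icc (-1 : ℝ) 1) :
    IntervalIntegrable (fun x => f x * ρ x) volume a b := by
  obtain ⟨C, hC⟩ := isCompact_Icc.exists_bound_of_continuousOn
    (s := Icc (-1 : ℝ) 1) hf.continuousOn
  have key : ∀ u v : ℝ, u ∈ Icc (-1:ℝ) 1 → v ∈ Icc (-1:ℝ) 1 →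
      IntegrableOn (fun x => f x * ρ x) (Ioc u v) volume := by
    intro u v hu hv
    have hsub : Ioc u v ⊆ Ioc (-1 : ℝ) 1 := Ioc_subset_Ioc hu.1 hv.2
    apply Integrable.bdd_mul (c := C) (hρ.mono_set hsub)
      (hf.aestronglyMeasurable.restrict)
    rw [ae_restrict_iff' measurableSet_Ioc]
    exact Filter.Eventually.of_forall fun x hx => hC x ⟨hu.1.trans hx.1.le, hx.2.trans hv.2⟩
  exact ⟨key a b ha hb, key b a hb ha⟩

lemma intervalIntegral_eq_Ioo (f : ℝ → ℝ) {a b : ℝ} (hab : a ≤ b) :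
    ∫ x in a..b, f x = ∫ x in Ioo a b, f x := by
  rw [intervalIntegral.integral_of_le hab, MeasureTheory.integral_Ioc_eq_integral_Ioo]

lemma momentAux {n : ℕ} {Sfam : ℕ → ℝ → ℝ} {ρ : ℝ → ℝ}
    (hS : ∀ k < n, IsReflection k (Sfam k))
    (hρint : IntegrableOn ρ (Ioc (-1 : ℝ) 1) volume)
    (hρrefl : ∀ k < n, ∀ y ∈ Ioo (xseq (k + 1)) 1, ρ y = -(ρ (Sfam k y) * deriv (Sfam k) y)) :
    ∀ d k, k + d = n → ∀ j : ℕ, 1 ≤ j → j < 2 ^ n → 2 ^ k ∣ j →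
      (∫ x in Ioo (xseq k) 1, (Polynomial.Chebyshev.T ℝ (j : ℤ)).eval x * ρ x) = 0 := by
  intro d
  induction d with
  | zero =>
      intro k hk j hj1 hj2 hdvd
      exfalso
      rw [Nat.add_zero] at hk
      subst hk
      exact absurd (Nat.le_of_dvd hj1 hdvd) (by omega)
  | succ d ih =>
      intro k hk j hj1 hj2 hdvd
      have hkn : k < n := by omega
      obtain ⟨r, hjr⟩ := hdvd
      have hr1 : 1 ≤ r := by
        rcases Nat.eq_zero_or_pos r with h | h
        · subst h; simp at hjr; omega
        · exact h
      set g : ℝ → ℝ := fun u => (Polynomial.Chebyshev.T ℝ (r : ℤ)).eval u with hg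
      have hcomp : ∀ x : ℝ, (Polynomial.Chebyshev.T ℝ (j : ℤ)).eval x = g (Q k x) := by
        intro x
        show (Polynomial.Chebyshev.T ℝ (j : ℤ)).eval x
            = (Polynomial.Chebyshev.T ℝ (r : ℤ)).eval (Q k x)
        rw [Q_eq_T, ← Polynomial.eval_comp, ← Polynomial.Chebyshev.T_mul]
        congr 2
        push_cast [hjr]
        ring
      have hgcont : Continuous fun x : ℝ => g (Q k x) :=
        (Polynomial.continuous_aeval _).comp (Q_cont k)
      have h1 : IntervalIntegrable (fun x => g (Q k x) * ρ x) volume (xseq k) (xseq (k+1)) :=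
        cont_mul_rho hρint hgcont (xseq_mem k) (xseq_mem (k+1))
      have h2 : IntervalIntegrable (fun x => g (Q k x) * ρ x) volume (xseq (k+1)) 1 :=
        cont_mul_rho hρint hgcont (xseq_mem (k+1)) (right_mem_Icc.2 (by norm_num))
      have hsplit : (∫ x in Ioo (xseq k) 1, g (Q k x) * ρ x)
          = (∫ x in Ioo (xseq k) (xseq (k+1)), g (Q k x) * ρ x)
            + ∫ x in Ioo (xseq (k+1)) 1, g (Q k x) * ρ x := by
        rw [← intervalIntegral_eq_Ioo _ (xseq_lt_one k).le,
            ← intervalIntegral_eq_Ioo _ (xseq_lt_succ k).le,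
            ← intervalIntegral_eq_Ioo _ (xseq_lt_one (k+1)).le]
        exact (intervalIntegral.integral_add_adjacent_intervals h1 h2).symm
      have hgoal : (∫ x in Ioo (xseq k) 1, (Polynomial.Chebyshev.T ℝ (j : ℤ)).eval x * ρ x)
          = ∫ x in Ioo (xseq k) 1, g (Q k x) * ρ x :=
        MeasureTheory.setIntegral_congr_fun measurableSet_Ioo fun x _ => by rw [hcomp x]
      rw [hgoal, hsplit, step_lemma (hS k hkn) (hρrefl k hkn) g]
      have hpar : (∫ y in Ioo (xseq (k+1)) 1, g (-(Q k y)) * ρ y)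
          = ∫ y in Ioo (xseq (k+1)) 1, ((-1:ℝ)^r * g (Q k y)) * ρ y := by
        apply MeasureTheory.setIntegral_congr_fun measurableSet_Ioo
        intro y hy
        have hy1 : y ∈ Icc (-1:ℝ) 1 := ⟨(xseq_mem (k+1)).1.trans hy.1.le, hy.2.le⟩
        show g (-(Q k y)) * ρ y = ((-1:ℝ)^r * g (Q k y)) * ρ y
        rw [hg]
        simp only []
        rw [T_eval_neg r (Q_mem hy1)]
      rw [hpar]
      have hA : (∫ y in Ioo (xseq (k+1)) 1, ((-1:ℝ)^r * g (Q k y)) * ρ y)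
          = (-1:ℝ)^r * ∫ y in Ioo (xseq (k+1)) 1, g (Q k y) * ρ y := by
        simp only [mul_assoc]
        exact MeasureTheory.integral_const_mul _ _
      rw [hA]
      rcases Nat.even_or_odd r with he | ho
      · obtain ⟨r', hr'⟩ := he
        have hpow : (-1:ℝ)^r = 1 := Even.neg_one_pow ⟨r', hr'⟩
        have hA0 : (∫ y in Ioo (xseq (k+1)) 1, g (Q k y) * ρ y) = 0 := by
          have hih := ih (k+1) (by omega) j hj1 hj2 ⟨r', by rw [hjr, hr']; ring⟩
          rw [← hih]
          exact MeasureTheory.setIntegral_congr_fun measurableSet_Ioo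
            fun x _ => by rw [hcomp x]
        rw [hA0, hpow]
        ring
      · have hpow : (-1:ℝ)^r = -1 := Odd.neg_one_pow ho
        rw [hpow]
        ring

lemma moment {n : ℕ} {Sfam : ℕ → ℝ → ℝ} {ρ : ℝ → ℝ}
    (hS : ∀ k < n, IsReflection k (Sfam k))
    (hρint : IntegrableOn ρ (Ioc (-1 : ℝ) 1) volume)
    (hρrefl : ∀ k < n, ∀ y ∈ Ioo (xseq (k + 1)) 1, ρ y = -(ρ (Sfam k y) * deriv (Sfam k) y))
    {j : ℕ} (hj1 : 1 ≤ j) (hj2 : j < 2 ^ n) :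
    (∫ x in (-1 : ℝ)..1, (Polynomial.Chebyshev.T ℝ (j : ℤ)).eval x * ρ x) = 0 := by
  have h := momentAux hS hρint hρrefl n 0 (by omega) j hj1 hj2 (by simpa using one_dvd j)
  rw [intervalIntegral_eq_Ioo _ (by norm_num : (-1 : ℝ) ≤ 1)]
  have hx0 : xseq 0 = -1 := rfl
  rw [← hx0]
  exact h

lemma cos_sum_eq (m : ℕ) (α : ℝ) (h : Real.sin α ≠ 0) :
    ∑ i ∈ Finset.range m, Real.cos ((2 * i + 1) * α)
      = Real.sin (2 * m * α) / (2 * Real.sin α) := by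
  have key : ∀ i : ℕ, 2 * Real.sin α * Real.cos ((2 * i + 1) * α)
      = Real.sin (2 * (i + 1 : ℕ) * α) - Real.sin (2 * i * α) := by
    intro i
    push_cast
    rw [show 2 * ((i : ℝ) + 1) * α = (2 * i + 1) * α + α by ring,
      show 2 * (i : ℝ) * α = (2 * i + 1) * α - α by ring, Real.sin_add, Real.sin_sub]
    ring
  have hmain : 2 * Real.sin α * ∑ i ∈ Finset.range m, Real.cos ((2 * i + 1) * α)
      = Real.sin (2 * m * α) := by
    rw [Finset.mul_sum, Finset.sum_congr rfl (fun i _ => key i),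
      Finset.sum_range_sub (fun i : ℕ => Real.sin (2 * i * α))]
    simp
  rw [eq_div_iff (mul_ne_zero two_ne_zero h)]
  linarith [hmain]

lemma T_coeff : ∀ j : ℕ, (Polynomial.Chebyshev.T ℝ (j : ℤ)).natDegree ≤ j ∧
    (Polynomial.Chebyshev.T ℝ (j : ℤ)).coeff j ≠ 0 := by
  intro j
  induction j using Nat.strong_induction_on with
  | _ j ih =>
    match j with
    | 0 => simp [Polynomial.Chebyshev.T_zero]
    | 1 => simp [Polynomial.Chebyshev.T_one]
    | (j + 2) =>
      have ih1 := ih (j + 1) (by omega)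
      have ih0 := ih j (by omega)
      have c1 : ((j + 1 : ℕ) : ℤ) = (j : ℤ) + 1 := by push_cast; ring
      have c2 : ((j + 2 : ℕ) : ℤ) = (j : ℤ) + 2 := by push_cast; ring
      rw [c1] at ih1
      rw [c2, Polynomial.Chebyshev.T_add_two]
      have hX : (2 * X : ℝ[X]).natDegree ≤ 1 :=
        le_trans Polynomial.natDegree_mul_le (by simp [Polynomial.natDegree_X_le])
      have hd1 : (2 * X * Polynomial.Chebyshev.T ℝ ((j : ℤ) + 1)).natDegree ≤ j + 2 :=
        le_trans Polynomial.natDegree_mul_le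
          (le_trans (Nat.add_le_add hX ih1.1) (by omega))
      constructor
      · exact le_trans (Polynomial.natDegree_sub_le _ _)
          (max_le hd1 (le_trans ih0.1 (by omega)))
      · have hB : (Polynomial.Chebyshev.T ℝ (j : ℤ)).coeff (j + 2) = 0 :=
          Polynomial.coeff_eq_zero_of_natDegree_lt (lt_of_le_of_lt ih0.1 (by omega))
        have hA : (2 * X * Polynomial.Chebyshev.T ℝ ((j : ℤ) + 1)).coeff (j + 2)
            = 2 * (Polynomial.Chebyshev.T ℝ ((j : ℤ) + 1)).coeff (j + 1) := by
          rw [mul_assoc]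
          rw [Polynomial.coeff_ofNat_mul]
          rw [show j + 2 = (j + 1) + 1 from rfl, Polynomial.coeff_X_mul]
        rw [Polynomial.coeff_sub, hA, hB]
        simpa using ih1.2

/-- The Chebyshev-type quadrature nodes. -/

noncomputable def node (n i : ℕ) : ℝ := Real.cos ((2 * i + 1) * (π / 2 ^ n))

lemma node_angle_mem {n i : ℕ} (h : i < 2 ^ (n - 1)) (hn : 1 ≤ n) :
    (2 * (i : ℝ) + 1) * (π / 2 ^ n) ∈ Ioo 0 π := by
  have h2 : (2 * i + 1 : ℕ) < 2 ^ n := by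
    have : 2 * 2 ^ (n - 1) = 2 ^ n := by
      rw [← pow_succ']
      congr 1
      omega
    omega
  have h2' : (2 * (i : ℝ) + 1) < 2 ^ n := by exact_mod_cast h2
  have hpos : (0 : ℝ) < 2 ^ n := by positivity
  constructor
  · have : (0:ℝ) < 2 * (i:ℝ) + 1 := by positivity
    exact mul_pos this (pipow_pos n)
  · calc (2 * (i : ℝ) + 1) * (π / 2 ^ n) < 2 ^ n * (π / 2 ^ n) :=
        mul_lt_mul_of_pos_right h2' (pipow_pos n)
    _ = π := by field_simp

lemma node_mem (n i : ℕ) : node n i ∈ Icc (-1 : ℝ) 1 :=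
  ⟨Real.neg_one_le_cos _, Real.cos_le_one _⟩

lemma node_inj {n : ℕ} (hn : 1 ≤ n) {i i' : ℕ} (h : i < 2 ^ (n - 1)) (h' : i' < 2 ^ (n - 1))
    (heq : node n i = node n i') : i = i' := by
  have m1 := node_angle_mem h hn
  have m2 := node_angle_mem h' hn
  have := Real.injOn_cos ⟨m1.1.le, m1.2.le⟩ ⟨m2.1.le, m2.2.le⟩ heq
  have hpos := pipow_pos n
  have h3 : (2 * (i : ℝ) + 1) = 2 * (i' : ℝ) + 1 :=
    mul_right_cancel₀ (pipow_pos n).ne' this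
  have h4 : (i : ℝ) = (i' : ℝ) := by linarith
  exact_mod_cast h4

lemma node_T_sum {n : ℕ} (hn : 1 ≤ n) {j : ℕ} (hj1 : 1 ≤ j) (hj2 : j < 2 ^ n) :
    ∑ i ∈ Finset.range (2 ^ (n - 1)), (Polynomial.Chebyshev.T ℝ (j : ℤ)).eval (node n i) = 0 := by
  set α : ℝ := (j : ℝ) * (π / 2 ^ n) with hα
  have hsin : Real.sin α ≠ 0 := by
    have hj2' : (j : ℝ) < 2 ^ n := by exact_mod_cast hj2
    have hj1' : (1 : ℝ) ≤ (j : ℝ) := by exact_mod_cast hj1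
    have h1 : 0 < α := by
      rw [hα]; exact mul_pos (by linarith) (pipow_pos n)
    have h2 : α < π := by
      rw [hα]
      calc (j : ℝ) * (π / 2 ^ n) < 2 ^ n * (π / 2 ^ n) :=
          mul_lt_mul_of_pos_right hj2' (pipow_pos n)
      _ = π := by field_simp
    exact (Real.sin_pos_of_pos_of_lt_pi h1 h2).ne'
  have heval : ∀ i : ℕ, (Polynomial.Chebyshev.T ℝ (j : ℤ)).eval (node n i)
      = Real.cos ((2 * i + 1) * α) := by
    intro i
    rw [node, Polynomial.Chebyshev.T_real_cos, hα]
    push_cast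
    ring_nf
  rw [Finset.sum_congr rfl (fun i _ => heval i), cos_sum_eq _ _ hsin]
  have h2m : (2 : ℝ) * (2 ^ (n - 1) : ℕ) = 2 ^ n := by
    have : 2 * 2 ^ (n - 1) = 2 ^ n := by rw [← pow_succ']; congr 1; omega
    exact_mod_cast this
  have : 2 * ((2 ^ (n - 1) : ℕ) : ℝ) * α = (j : ℝ) * π := by
    rw [hα, ← mul_assoc, h2m]
    field_simp
  rw [this, Real.sin_nat_mul_pi]
  simp

/-- For `ρ ∈ W_n` and `m = 2^{n-1}`, the maximal exact degree is exactly `2m - 1 = 2^n - 1`: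
a Chebyshev-type quadrature of degree `2^n - 1` exists, but none of degree `2^n`. -/
theorem max_degree_eq (n : ℕ) (hn : 1 ≤ n) (S : ℕ → ℝ → ℝ)
    (hS : ∀ k < n, IsReflection k (S k)) (ρ : ℝ → ℝ) (hρ : memW S n ρ) :
    ChebQuadDeg ρ (2 ^ (n - 1)) (2 ^ n - 1) ∧ ¬ ChebQuadDeg ρ (2 ^ (n - 1)) (2 ^ n) := by
  obtain ⟨hρ0, hρ1, hρrefl⟩ := hρ
  have hρint : IntegrableOn ρ (Ioc (-1 : ℝ) 1) volume := rho_integrableOn hρ1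
  have hm0 : 0 < 2 ^ (n - 1) := pow_pos (by norm_num) _
  set m : ℕ := 2 ^ (n - 1) with hm
  have hmR : (m : ℝ) ≠ 0 := Nat.cast_ne_zero.2 hm0.ne'
  have h2m : 2 * m = 2 ^ n := by rw [hm, ← pow_succ']; congr 1; omega
  have hmem1 : (-1 : ℝ) ∈ Icc (-1 : ℝ) 1 := by norm_num
  have hmem2 : (1 : ℝ) ∈ Icc (-1 : ℝ) 1 := by norm_num
  have hPI : ∀ f : ℝ → ℝ, Continuous f →
      IntervalIntegrable (fun x => f x * ρ x) volume (-1 : ℝ) 1 :=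
    fun f hf => cont_mul_rho hρint hf hmem1 hmem2
  -- exactness on the Chebyshev basis
  have hTquad : ∀ d : ℕ, d ≤ 2 ^ n - 1 →
      (∫ x in (-1 : ℝ)..1, (Polynomial.Chebyshev.T ℝ (d : ℤ)).eval x * ρ x)
        = (1 / (m : ℝ)) * ∑ i ∈ Finset.range m,
            (Polynomial.Chebyshev.T ℝ (d : ℤ)).eval (node n i) := by
    intro d hd
    rcases Nat.eq_zero_or_pos d with rfl | hd1
    · simp only [Int.ofNat_zero, Nat.cast_zero, Polynomial.Chebyshev.T_zero,
        Polynomial.eval_one, one_mul, Nat.cast_ofNat, Finset.sum_const, Finset.card_range,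
        nsmul_eq_mul, mul_one]
      rw [hρ1]
      field_simp
    · have hd2 : d < 2 ^ n := by
        have : 1 ≤ 2 ^ n := Nat.one_le_two_pow
        omega
      rw [moment hS hρint hρrefl hd1 hd2, node_T_sum hn hd1 hd2]
      ring
  -- exactness for all polynomials of degree ≤ 2^n - 1, by descent in the Chebyshev basis
  have key : ∀ d : ℕ, d ≤ 2 ^ n - 1 → ∀ P : Polynomial ℝ, P.natDegree ≤ d →
      (∫ x in (-1 : ℝ)..1, P.eval x * ρ x)
        = (1 / (m : ℝ)) * ∑ i ∈ Finset.range m, P.eval (node n i) := by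
    intro d
    induction d using Nat.strong_induction_on with
    | _ d ih =>
      intro hd P hP
      set c : ℝ := P.coeff d / (Polynomial.Chebyshev.T ℝ (d : ℤ)).coeff d with hc
      set P' : Polynomial ℝ := P - Polynomial.C c * Polynomial.Chebyshev.T ℝ (d : ℤ) with hP'def
      have hTc := T_coeff d
      have hco : ∀ e, d ≤ e → P'.coeff e = 0 := by
        intro e he
        rcases eq_or_lt_of_le he with rfl | hlt
        · rw [hP'def, Polynomial.coeff_sub, Polynomial.coeff_C_mul, hc,
            div_mul_cancel₀ _ hTc.2, sub_self]
        · rw [hP'def, Polynomial.coeff_sub, Polynomial.coeff_C_mul,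
            Polynomial.coeff_eq_zero_of_natDegree_lt (lt_of_le_of_lt hP hlt),
            Polynomial.coeff_eq_zero_of_natDegree_lt (lt_of_le_of_lt hTc.1 hlt)]
          ring
      have hsplitP : P = P' + Polynomial.C c * Polynomial.Chebyshev.T ℝ (d : ℤ) := by
        rw [hP'def]; ring
      have hint1 : IntervalIntegrable (fun x => P'.eval x * ρ x) volume (-1 : ℝ) 1 :=
        hPI _ P'.continuous
      have hint2 : IntervalIntegrable
          (fun x => (Polynomial.Chebyshev.T ℝ (d : ℤ)).eval x * ρ x) volume (-1 : ℝ) 1 :=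
        hPI _ (Polynomial.Chebyshev.T ℝ (d : ℤ)).continuous
      have hIlin : (∫ x in (-1 : ℝ)..1, P.eval x * ρ x)
          = (∫ x in (-1 : ℝ)..1, P'.eval x * ρ x)
            + c * ∫ x in (-1 : ℝ)..1, (Polynomial.Chebyshev.T ℝ (d : ℤ)).eval x * ρ x := by
        rw [← intervalIntegral.integral_const_mul,
          ← intervalIntegral.integral_add hint1 (hint2.const_mul c)]
        apply intervalIntegral.integral_congr
        intro x _
        conv_lhs => rw [hsplitP]
        simp only [Polynomial.eval_add, Polynomial.eval_mul, Polynomial.eval_C]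
        ring
      have hSlin : ((1 : ℝ) / (m : ℝ)) * ∑ i ∈ Finset.range m, P.eval (node n i)
          = (1 / (m : ℝ)) * ∑ i ∈ Finset.range m, P'.eval (node n i)
            + c * ((1 / (m : ℝ)) * ∑ i ∈ Finset.range m,
                (Polynomial.Chebyshev.T ℝ (d : ℤ)).eval (node n i)) := by
        conv_lhs => rw [hsplitP]
        simp only [Polynomial.eval_add, Polynomial.eval_mul, Polynomial.eval_C]
        rw [Finset.sum_add_distrib, ← Finset.mul_sum]
        ring
      have hP'0 : (∫ x in (-1 : ℝ)..1, P'.eval x * ρ x)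
          = (1 / (m : ℝ)) * ∑ i ∈ Finset.range m, P'.eval (node n i) := by
        rcases Nat.eq_zero_or_pos d with rfl | hd1
        · have hz : P' = 0 := Polynomial.ext fun e => by simpa using hco e (Nat.zero_le e)
          rw [hz]
          simp
        · exact ih (d - 1) (by omega) (by omega) P'
            (Polynomial.natDegree_le_iff_coeff_eq_zero.2 fun e he => hco e (by omega))
      rw [hIlin, hSlin, hP'0, hTquad d hd]
  constructor
  · -- existence
    refine ⟨fun i => node n (i : ℕ), ?_, fun i => node_mem n i, ?_⟩
    · intro i i' h
      exact Fin.ext (node_inj hn i.isLt i'.isLt h)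
    · intro P hP
      rw [key (2 ^ n - 1) le_rfl P hP]
      congr 1
      exact (Fin.sum_univ_eq_sum_range (fun i => P.eval (node n i)) m).symm
  · -- impossibility
    rintro ⟨t, htinj, htmem, hquad⟩
    set P : Polynomial ℝ := ∏ i : Fin m, (Polynomial.X - Polynomial.C (t i)) ^ 2 with hPdef
    have hPdeg : P.natDegree ≤ 2 ^ n := by
      calc P.natDegree ≤ ∑ i : Fin m, ((Polynomial.X - Polynomial.C (t i)) ^ 2).natDegree :=
            Polynomial.natDegree_prod_le _ _
      _ ≤ ∑ _i : Fin m, 2 := by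
            refine Finset.sum_le_sum fun i _ => ?_
            calc ((Polynomial.X - Polynomial.C (t i)) ^ 2).natDegree
                ≤ 2 * (Polynomial.X - Polynomial.C (t i)).natDegree :=
                  Polynomial.natDegree_pow_le
            _ ≤ 2 := by rw [Polynomial.natDegree_X_sub_C]
      _ = 2 * m := by simp [Finset.card_univ, mul_comm]
      _ = 2 ^ n := h2m
    have hquadP := hquad P hPdeg
    have hsum0 : ∑ k, P.eval (t k) = 0 :=
      Finset.sum_eq_zero fun k _ => by
        rw [hPdef, Polynomial.eval_prod]
        exact Finset.prod_eq_zero (Finset.mem_univ k) (by simp)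
    rw [hsum0, mul_zero] at hquadP
    have hIoo : (∫ x in Ioo (-1 : ℝ) 1, P.eval x * ρ x) = 0 := by
      rw [← MeasureTheory.integral_Ioc_eq_integral_Ioo,
        ← intervalIntegral.integral_of_le (by norm_num : (-1 : ℝ) ≤ 1)]
      exact hquadP
    have hnonneg : 0 ≤ᵐ[volume.restrict (Ioo (-1 : ℝ) 1)] fun x => P.eval x * ρ x := by
      refine (MeasureTheory.ae_restrict_iff' measurableSet_Ioo).2
        (Filter.Eventually.of_forall fun x hx => ?_)
      show (0 : ℝ) ≤ P.eval x * ρ x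
      have h1 : 0 ≤ P.eval x := by
        rw [hPdef, Polynomial.eval_prod]
        exact Finset.prod_nonneg fun i _ => by
          rw [Polynomial.eval_pow]
          exact sq_nonneg _
      exact mul_nonneg h1 (hρ0 x hx)
    have hIntOn : Integrable (fun x => P.eval x * ρ x) (volume.restrict (Ioo (-1 : ℝ) 1)) :=
      ((hPI _ P.continuous).1).mono_set Ioo_subset_Ioc_self
    have hae0 : (fun x => P.eval x * ρ x) =ᵐ[volume.restrict (Ioo (-1 : ℝ) 1)] 0 :=
      (MeasureTheory.integral_eq_zero_iff_of_nonneg_ae hnonneg hIntOn).1 hIoo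
    have hPne : P ≠ 0 :=
      Polynomial.Monic.ne_zero
        (Polynomial.monic_prod_of_monic _ _ fun i _ => (Polynomial.monic_X_sub_C (t i)).pow 2)
    have hroots : ∀ᵐ x ∂(volume.restrict (Ioo (-1 : ℝ) 1)), P.eval x ≠ 0 := by
      apply MeasureTheory.ae_restrict_of_ae
      rw [MeasureTheory.ae_iff]
      simp only [not_not]
      have hfin : {x : ℝ | P.IsRoot x}.Finite := Polynomial.finite_setOf_isRoot hPne
      exact hfin.measure_zero _
    have hρae0 : ρ =ᵐ[volume.restrict (Ioo (-1 : ℝ) 1)] 0 := by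
      filter_upwards [hae0, hroots] with x h1 h2
      rcases mul_eq_zero.1 h1 with h | h
      · exact absurd h h2
      · exact h
    have hZ : (∫ x in Ioo (-1 : ℝ) 1, ρ x) = 0 := by
      rw [MeasureTheory.integral_congr_ae hρae0]
      simp
    rw [intervalIntegral.integral_of_le (by norm_num : (-1 : ℝ) ≤ 1),
      MeasureTheory.integral_Ioc_eq_integral_Ioo, hZ] at hρ1
    norm_num at hρ1
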